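/- For every τ > 0 the matrix I − τ·A_{α,h} is invertible, all entries of (I − τ·A_{α,h})^{−1} are nonnegative, and the maximum absolute row-sum operator norm satisfies ‖(I − τ·A_{α,h})^{−1}‖_∞ = 1. Consequently the implicit Euler scheme u^{n+1} = (I − τ·A_{α,h})^{−1} u^n is unconditionally stable in the maximum norm: ‖u^n‖_∞ ≤ ‖u^0‖_∞ for all n. -/

import Mathlib

/-- The Grünwald--Letnikov coefficients `g_k(α) = (-1)^k C(α,k)`, where
`C(α,k) = α(α-1)⋯(α-k+1)/k!` is the generalized binomial coefficient. -/
noncomputable def glCoeff (α : ℝ) (k : ℕ) : ℝ :=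
  (-1 : ℝ) ^ k * ((∏ i ∈ Finset.range k, (α - i)) / (Nat.factorial k))

/-- The Neumann extension `v̂ : ℤ → ℝ` of a vector `v = (v_0, …, v_N) ∈ ℝ^{N+1}`:
`v̂_j = v_j` for `0 ≤ j ≤ N`, `v̂_{-1-j} = v̂_j`, and `v̂_{j+2(N+1)} = v̂_j`. -/
def neumannExt (N : ℕ) (v : Fin (N + 1) → ℝ) (j : ℤ) : ℝ :=
  if h : (j % (2 * (N + 1))).toNat ≤ N then
    v ⟨(j % (2 * (N + 1))).toNat, Nat.lt_succ_of_le h⟩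
  else
    v ⟨2 * N + 1 - (j % (2 * (N + 1))).toNat, by
      have h2 : j % (2 * (N + 1)) < 2 * (N + 1) := Int.emod_lt_of_pos j (by positivity)
      omega⟩

/-- The mesh size `h = 1/(N+1)`. -/
noncomputable def gridH (N : ℕ) : ℝ := 1 / ((N : ℝ) + 1)

/-- The grid points `x_j = π h (j + 1/2)`, `h = 1/(N+1)`. -/
noncomputable def gridX (N : ℕ) (j : ℕ) : ℝ := Real.pi * gridH N * ((j : ℝ) + 1 / 2)

/-- The action of the Grünwald--Letnikov discretization matrix `A_{α,h}` (with `h = 1/(N+1)`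
and `C_σ = -σ/(2 cos(απ/2))`) on a vector `v ∈ ℝ^{N+1}` via the Neumann extension:
`[A_{α,h} v]_j = (C_σ/h^α) Σ_{k=0}^∞ g_k(α) (v̂_{j+1-k} + v̂_{j-1+k})`. -/
noncomputable def Amul (α σ : ℝ) (N : ℕ) (v : Fin (N + 1) → ℝ) (j : Fin (N + 1)) : ℝ :=
  (-σ / (2 * Real.cos (α * Real.pi / 2)) / gridH N ^ α) *
    ∑' k : ℕ, glCoeff α k *
      (neumannExt N v ((j : ℤ) + 1 - (k : ℤ)) + neumannExt N v ((j : ℤ) - 1 + (k : ℤ)))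

/-- The matrix `A_{α,h} ∈ ℝ^{(N+1)×(N+1)}`, whose `m`-th column is the action of the
discretized operator on the `m`-th standard basis vector. -/
noncomputable def Amat (α σ : ℝ) (N : ℕ) : Matrix (Fin (N + 1)) (Fin (N + 1)) ℝ :=
  Matrix.of fun j m => Amul α σ N (fun i => if i = m then 1 else 0) j

/-- The eigenvalues `λ_k = -(σ/cos(απ/2)) (2/h)^α (sin(kπh/2))^α cos(kπh + (α/2)(π - kπh))`. -/
noncomputable def eigVal (α σ : ℝ) (N : ℕ) (k : ℕ) : ℝ :=
  -(σ / Real.cos (α * Real.pi / 2)) * (2 / gridH N) ^ α *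
    Real.sin ((k : ℝ) * Real.pi * gridH N / 2) ^ α *
    Real.cos ((k : ℝ) * Real.pi * gridH N + α / 2 * (Real.pi - (k : ℝ) * Real.pi * gridH N))

lemma glCoeff_zero (α : ℝ) : glCoeff α 0 = 1 := by simp [glCoeff]

lemma glCoeff_succ (α : ℝ) (k : ℕ) :
    glCoeff α (k + 1) = glCoeff α k * ((k - α) / (k + 1)) := by
  have h1 : ((Nat.factorial k : ℝ)) ≠ 0 := Nat.cast_ne_zero.2 (Nat.factorial_ne_zero k)
  have h2 : ((k : ℝ) + 1) ≠ 0 := by positivity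
  simp only [glCoeff, pow_succ, Finset.prod_range_succ, Nat.factorial_succ]
  push_cast
  field_simp
  ring

lemma glCoeff_one (α : ℝ) : glCoeff α 1 = -α := by
  rw [glCoeff_succ, glCoeff_zero]; norm_num

lemma glCoeff_pascal (α : ℝ) (n : ℕ) :
    glCoeff α (n + 1) = glCoeff (α - 1) (n + 1) - glCoeff (α - 1) n := by
  have h1 : ((Nat.factorial n : ℝ)) ≠ 0 := Nat.cast_ne_zero.2 (Nat.factorial_ne_zero n)
  have h2 : ((n : ℝ) + 1) ≠ 0 := by positivity
  have key : ∏ i ∈ Finset.range (n + 1), (α - i)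
      = (∏ i ∈ Finset.range n, (α - 1 - i)) * α := by
    rw [Finset.prod_range_succ']
    congr 1
    · exact Finset.prod_congr rfl fun i _ => by push_cast; ring
    · norm_num
  simp only [glCoeff, key, Finset.prod_range_succ, Nat.factorial_succ, pow_succ]
  push_cast
  field_simp
  ring

lemma sum_glCoeff (α : ℝ) (n : ℕ) :
    ∑ k ∈ Finset.range (n + 1), glCoeff α k = glCoeff (α - 1) n := by
  induction n with
  | zero => simp [glCoeff_zero]
  | succ n ih => rw [Finset.sum_range_succ, ih, glCoeff_pascal]; ring

variable {α : ℝ}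

lemma glCoeff_nonneg (h1 : 1 < α) (h2 : α ≤ 2) : ∀ k, 0 ≤ glCoeff α (k + 2) := by
  intro k
  induction k with
  | zero =>
    rw [glCoeff_succ, glCoeff_one]
    push_cast
    nlinarith
  | succ n ih =>
    rw [show n + 1 + 2 = (n + 2) + 1 by ring, glCoeff_succ]
    have : (0:ℝ) ≤ ((n + 2 : ℕ) : ℝ) - α := by push_cast; linarith
    positivity

lemma abs_glCoeff_sub_one_le (h1 : 1 < α) (h2 : α ≤ 2) :
    ∀ n : ℕ, |glCoeff (α - 1) (n + 1)| ≤ (α - 1) / (n + 1) := by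
  intro n
  induction n with
  | zero => rw [glCoeff_one]; rw [abs_neg, abs_of_pos (by linarith)]; norm_num
  | succ n ih =>
    have hn0 : (0:ℝ) ≤ (n:ℝ) := Nat.cast_nonneg n
    rw [glCoeff_succ, abs_mul]
    have hq : |(((n+1:ℕ):ℝ) - (α - 1)) / (((n+1:ℕ):ℝ) + 1)| ≤ ((n:ℝ)+1) / ((n:ℝ)+2) := by
      push_cast
      rw [abs_div, abs_of_nonneg (by linarith), abs_of_pos (by linarith)]
      rw [div_le_div_iff₀ (by linarith) (by linarith)]
      nlinarith
    calc |glCoeff (α-1) (n+1)| * |(((n+1:ℕ):ℝ) - (α - 1)) / (((n+1:ℕ):ℝ) + 1)|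
        ≤ ((α - 1) / ((n:ℝ)+1)) * (((n:ℝ)+1) / ((n:ℝ)+2)) := by
          apply mul_le_mul (by exact_mod_cast ih) hq (abs_nonneg _)
            (div_nonneg (by linarith) (by linarith))
      _ = (α - 1) / (((n+1:ℕ):ℝ) + 1) := by
          push_cast
          rw [div_mul_div_comm]
          rw [mul_comm ((n:ℝ)+1)]
          rw [mul_div_mul_right _ _ (by linarith : (n:ℝ)+1 ≠ 0)]
          ring_nf

lemma abs_glCoeff_sub_one_le_one (h1 : 1 < α) (h2 : α ≤ 2) (n : ℕ) :
    |glCoeff (α - 1) n| ≤ 1 := by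
  cases n with
  | zero => rw [glCoeff_zero]; norm_num
  | succ n =>
    refine (abs_glCoeff_sub_one_le h1 h2 n).trans ?_
    have hn0 : (0:ℝ) ≤ (n:ℝ) := Nat.cast_nonneg n
    rw [div_le_one (by linarith)]
    linarith

lemma tendsto_glCoeff_sub_one (h1 : 1 < α) (h2 : α ≤ 2) :
    Filter.Tendsto (fun n => glCoeff (α - 1) n) Filter.atTop (nhds 0) := by
  have hbd : ∀ᶠ n : ℕ in Filter.atTop, ‖glCoeff (α - 1) n‖ ≤ (α - 1) / (n : ℝ) := by
    filter_upwards [Filter.eventually_ge_atTop 1] with n hn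
    obtain ⟨m, rfl⟩ := Nat.exists_eq_add_of_le hn
    rw [add_comm 1 m]
    have := abs_glCoeff_sub_one_le h1 h2 m
    push_cast at this ⊢
    exact this
  exact squeeze_zero_norm' hbd
    (Filter.Tendsto.div_atTop tendsto_const_nhds tendsto_natCast_atTop_atTop)

lemma summable_abs_glCoeff (h1 : 1 < α) (h2 : α ≤ 2) :
    Summable (fun k => |glCoeff α k|) := by
  apply summable_of_sum_range_le (c := 3 * α) (fun n => abs_nonneg _)
  intro n
  have mono : ∀ a b : ℕ, a ≤ b →
      ∑ k ∈ Finset.range a, |glCoeff α k| ≤ ∑ k ∈ Finset.range b, |glCoeff α k| := by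
    intro a b hab
    exact Finset.sum_le_sum_of_subset_of_nonneg (Finset.range_subset_range.2 hab)
      (fun i _ _ => abs_nonneg _)
  refine (mono n (n + 2) (by omega)).trans ?_
  have key : ∑ k ∈ Finset.range (n + 2), |glCoeff α k|
      = |glCoeff α 0| + |glCoeff α 1| + ∑ k ∈ Finset.range n, glCoeff α (k + 2) := by
    rw [Finset.sum_range_succ']
    rw [Finset.sum_range_succ']
    have : ∀ k ∈ Finset.range n, |glCoeff α (k + 1 + 1)| = glCoeff α (k + 2) := by
      intro k _
      rw [abs_of_nonneg (glCoeff_nonneg h1 h2 k)]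
    rw [Finset.sum_congr rfl this]
    ring
  rw [key, glCoeff_zero, glCoeff_one]
  have hs : ∑ k ∈ Finset.range n, glCoeff α (k + 2)
      = glCoeff (α - 1) (n + 1) - (1 - α) := by
    cases n with
    | zero =>
      simp only [Finset.range_zero, Finset.sum_empty, zero_add, glCoeff_one]
      ring
    | succ m =>
      have := sum_glCoeff α (m + 2)
      rw [Finset.sum_range_succ'] at this
      rw [Finset.sum_range_succ'] at this
      have h0 : ∑ k ∈ Finset.range (m+1), glCoeff α (k + 1 + 1) = ∑ k ∈ Finset.range (m+1), glCoeff α (k + 2) := rfl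
      rw [glCoeff_zero, glCoeff_one] at this
      rw [h0] at this
      linarith
  rw [hs, abs_one, abs_neg, abs_of_pos (by linarith : (0:ℝ) < α)]
  have := abs_le.1 (abs_glCoeff_sub_one_le_one h1 h2 (n+1))
  linarith

lemma summable_glCoeff (h1 : 1 < α) (h2 : α ≤ 2) : Summable (glCoeff α) :=
  (summable_abs_glCoeff h1 h2).of_abs

lemma tsum_glCoeff (h1 : 1 < α) (h2 : α ≤ 2) : ∑' k, glCoeff α k = 0 := by
  have hs := (summable_glCoeff h1 h2).hasSum.tendsto_sum_nat
  have hshift : Filter.Tendsto (fun n => ∑ k ∈ Finset.range (n + 1), glCoeff α k)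
      Filter.atTop (nhds (∑' k, glCoeff α k)) :=
    hs.comp (Filter.tendsto_add_atTop_nat 1)
  have heq : (fun n => ∑ k ∈ Finset.range (n + 1), glCoeff α k)
      = fun n => glCoeff (α - 1) n := funext fun n => sum_glCoeff α n
  rw [heq] at hshift
  exact tendsto_nhds_unique hshift (tendsto_glCoeff_sub_one h1 h2)

/-- The index class of an integer under the Neumann (reflect+periodize) extension. -/
def cls (N : ℕ) (j : ℤ) : Fin (N + 1) :=
  if h : (j % (2 * (N + 1))).toNat ≤ N then
    ⟨(j % (2 * (N + 1))).toNat, Nat.lt_succ_of_le h⟩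
  else
    ⟨2 * N + 1 - (j % (2 * (N + 1))).toNat, by
      have h2 : j % (2 * (N + 1)) < 2 * (N + 1) := Int.emod_lt_of_pos j (by positivity)
      omega⟩

lemma neumannExt_eq (N : ℕ) (v : Fin (N + 1) → ℝ) (j : ℤ) :
    neumannExt N v j = v (cls N j) := by
  unfold neumannExt cls
  by_cases h : (j % (2 * (N + 1))).toNat ≤ N <;> simp [h]

lemma cls_coe (N : ℕ) (j : Fin (N + 1)) : cls N (j : ℤ) = j := by
  have h1 : ((j : ℤ)) % (2 * (N + 1)) = (j : ℤ) := by
    apply Int.emod_eq_of_lt (by positivity)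
    have := j.isLt
    omega
  apply Fin.ext
  unfold cls
  split
  · rename_i h
    show ((j:ℤ) % (2 * ((N:ℤ) + 1))).toNat = (j:ℕ)
    rw [h1]
    simp
  · rename_i h
    rw [h1] at h
    have := j.isLt
    simp at h
    omega

/-- indicator of class -/
noncomputable def ind (N : ℕ) (m : Fin (N + 1)) (x : ℤ) : ℝ :=
  if cls N x = m then 1 else 0

lemma ind_nonneg (N m x) : (0:ℝ) ≤ ind N m x := by unfold ind; split <;> norm_num
lemma ind_le_one (N m x) : ind N m x ≤ 1 := by unfold ind; split <;> norm_num

/-- summand in the entry formula -/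
noncomputable def F (α : ℝ) (N : ℕ) (j m : Fin (N + 1)) (k : ℕ) : ℝ :=
  glCoeff α k * (ind N m ((j : ℤ) + 1 - (k : ℤ)) + ind N m ((j : ℤ) - 1 + (k : ℤ)))

lemma summable_F {α : ℝ} (h1 : 1 < α) (h2 : α ≤ 2) (N : ℕ) (j m : Fin (N + 1)) :
    Summable (F α N j m) := by
  apply Summable.of_abs
  apply Summable.of_nonneg_of_le (fun k => abs_nonneg _)
    (fun k => ?_) ((summable_abs_glCoeff h1 h2).mul_left 2)
  rw [F, abs_mul]
  have hb : |ind N m ((j : ℤ) + 1 - (k : ℤ)) + ind N m ((j : ℤ) - 1 + (k : ℤ))| ≤ 2 := by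
    rw [abs_of_nonneg (add_nonneg (ind_nonneg _ _ _) (ind_nonneg _ _ _))]
    have := ind_le_one N m ((j : ℤ) + 1 - (k : ℤ))
    have := ind_le_one N m ((j : ℤ) - 1 + (k : ℤ))
    linarith
  have := mul_le_mul_of_nonneg_left hb (abs_nonneg (glCoeff α k))
  linarith

lemma Amat_apply (α σ : ℝ) (N : ℕ) (j m : Fin (N + 1)) :
    Amat α σ N j m = (-σ / (2 * Real.cos (α * Real.pi / 2)) / gridH N ^ α) *
      ∑' k : ℕ, F α N j m k := by
  simp only [Amat, Matrix.of_apply, Amul, F, ind, neumannExt_eq]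

lemma sum_ind (N : ℕ) (x : ℤ) : ∑ m : Fin (N + 1), ind N m x = 1 := by
  unfold ind
  simp

lemma sum_F (α : ℝ) (N : ℕ) (j : Fin (N + 1)) (k : ℕ) :
    ∑ m : Fin (N + 1), F α N j m k = 2 * glCoeff α k := by
  unfold F
  rw [← Finset.mul_sum, Finset.sum_add_distrib, sum_ind, sum_ind]
  ring

lemma coeff_pos {α σ : ℝ} (h1 : 1 < α) (h2 : α ≤ 2) (hσ : 0 < σ) (N : ℕ) :
    0 < -σ / (2 * Real.cos (α * Real.pi / 2)) / gridH N ^ α := by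
  have hpi := Real.pi_pos
  have hcos : Real.cos (α * Real.pi / 2) < 0 := by
    apply Real.cos_neg_of_pi_div_two_lt_of_lt
    · rw [div_lt_div_iff₀ (by norm_num) (by norm_num)] at *
      nlinarith
    · nlinarith
  have hH : (0:ℝ) < gridH N := by
    unfold gridH; positivity
  have hHp : (0:ℝ) < gridH N ^ α := Real.rpow_pos_of_pos hH α
  apply div_pos _ hHp
  rw [div_pos_iff]
  right
  constructor <;> nlinarith

lemma F_nonneg {α : ℝ} (h1 : 1 < α) (h2 : α ≤ 2) (N : ℕ) {j m : Fin (N + 1)}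
    (hjm : j ≠ m) (k : ℕ) : 0 ≤ F α N j m k := by
  match k with
  | 0 =>
    rw [F, glCoeff_zero]
    have := ind_nonneg N m ((j : ℤ) + 1 - ((0:ℕ) : ℤ))
    have := ind_nonneg N m ((j : ℤ) - 1 + ((0:ℕ) : ℤ))
    nlinarith
  | 1 =>
    have e1 : (j : ℤ) + 1 - ((1:ℕ) : ℤ) = (j : ℤ) := by push_cast; ring
    have e2 : (j : ℤ) - 1 + ((1:ℕ) : ℤ) = (j : ℤ) := by push_cast; ring
    rw [F, e1, e2]
    unfold ind
    rw [cls_coe, if_neg hjm]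
    norm_num
  | (k + 2) =>
    have hg := glCoeff_nonneg h1 h2 k
    have := ind_nonneg N m ((j : ℤ) + 1 - ((k + 2 : ℕ) : ℤ))
    have := ind_nonneg N m ((j : ℤ) - 1 + ((k + 2 : ℕ) : ℤ))
    rw [F]
    nlinarith

lemma Amat_offdiag_nonneg {α σ : ℝ} (h1 : 1 < α) (h2 : α ≤ 2) (hσ : 0 < σ) (N : ℕ)
    {j m : Fin (N + 1)} (hjm : j ≠ m) : 0 ≤ Amat α σ N j m := by
  rw [Amat_apply]
  exact mul_nonneg (coeff_pos h1 h2 hσ N).le (tsum_nonneg (F_nonneg h1 h2 N hjm))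

lemma Amat_row_sum {α σ : ℝ} (h1 : 1 < α) (h2 : α ≤ 2) (N : ℕ) (j : Fin (N + 1)) :
    ∑ m : Fin (N + 1), Amat α σ N j m = 0 := by
  have hsw : ∑ m : Fin (N + 1), ∑' k : ℕ, F α N j m k
      = ∑' k : ℕ, ∑ m : Fin (N + 1), F α N j m k :=
    (Summable.tsum_finsetSum (fun m _ => summable_F h1 h2 N j m)).symm
  simp only [Amat_apply, ← Finset.mul_sum]
  rw [hsw]
  have : ∑' k : ℕ, ∑ m : Fin (N + 1), F α N j m k = ∑' k : ℕ, 2 * glCoeff α k := by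
    congr 1; funext k; exact sum_F α N j k
  rw [this, tsum_mul_left, tsum_glCoeff h1 h2]
  ring

lemma Amat_diag_nonpos {α σ : ℝ} (h1 : 1 < α) (h2 : α ≤ 2) (hσ : 0 < σ) (N : ℕ)
    (j : Fin (N + 1)) : Amat α σ N j j ≤ 0 := by
  have hrow := Amat_row_sum (σ := σ) h1 h2 N j
  have hsplit : ∑ m : Fin (N + 1), Amat α σ N j m
      = Amat α σ N j j + ∑ m ∈ Finset.univ.erase j, Amat α σ N j m := by
    rw [Finset.add_sum_erase _ _ (Finset.mem_univ j)]
  have hnn : 0 ≤ ∑ m ∈ Finset.univ.erase j, Amat α σ N j m :=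
    Finset.sum_nonneg fun m hm =>
      Amat_offdiag_nonneg h1 h2 hσ N (fun h => (Finset.mem_erase.1 hm).1 h.symm)
  linarith [hsplit ▸ hrow]

attribute [local instance] Matrix.linftyOpNormedAddCommGroup Matrix.linftyOpNormedRing
  Matrix.linftyOpNormedSpace Matrix.linftyOpNormedAlgebra


noncomputable instance mcs {n : ℕ} : CompleteSpace (Matrix (Fin (n+1)) (Fin (n+1)) ℝ) :=
  (by infer_instance : CompleteSpace (Fin (n+1) → Fin (n+1) → ℝ))

lemma matrix_main {n : ℕ} (M : Matrix (Fin (n+1)) (Fin (n+1)) ℝ)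
    (hoff : ∀ j m, j ≠ m → M j m ≤ 0)
    (hrow : ∀ j, ∑ m, M j m = 1) :
    IsUnit M ∧ (∀ j m, 0 ≤ M⁻¹ j m) ∧ (∀ j, ∑ m, M⁻¹ j m = 1) ∧ ‖M⁻¹‖ ≤ 1 := by
  classical
  -- diagonal entries are ≥ 1
  have hdiag : ∀ j, 1 ≤ M j j := by
    intro j
    have hsplit : ∑ m, M j m = M j j + ∑ m ∈ Finset.univ.erase j, M j m :=
      (Finset.add_sum_erase _ _ (Finset.mem_univ j)).symm
    have hnp : ∑ m ∈ Finset.univ.erase j, M j m ≤ 0 :=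
      Finset.sum_nonpos fun m hm => hoff j m fun h => (Finset.mem_erase.1 hm).1 h.symm
    have := hrow j
    linarith
  set c : ℝ := 1 + ∑ j, (M j j - 1) with hc
  have hterm : ∀ j, (0:ℝ) ≤ M j j - 1 := fun j => by linarith [hdiag j]
  have hc1 : 1 ≤ c := by
    have : (0:ℝ) ≤ ∑ j, (M j j - 1) := Finset.sum_nonneg fun j _ => hterm j
    linarith
  have hc0 : (0:ℝ) < c := by linarith
  set P : Matrix (Fin (n+1)) (Fin (n+1)) ℝ := c • (1 : Matrix _ _ ℝ) - M with hP
  have hPapp : ∀ j m, P j m = c * (if j = m then 1 else 0) - M j m := by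
    intro j m
    simp [hP, Matrix.sub_apply, Matrix.smul_apply, Matrix.one_apply, smul_eq_mul]
  have hPnn : ∀ j m, 0 ≤ P j m := by
    intro j m
    rw [hPapp]
    by_cases h : j = m
    · subst h
      simp only [eq_self_iff_true, if_true, mul_one]
      have hle : M j j - 1 ≤ ∑ i, (M i i - 1) :=
        Finset.single_le_sum (fun i _ => hterm i) (Finset.mem_univ j)
      linarith
    · simp only [if_neg h, mul_zero]
      linarith [hoff j m h]
  have hProw : ∀ j, ∑ m, P j m = c - 1 := by
    intro j
    have : ∑ m, P j m = ∑ m, (c * (if j = m then 1 else 0) - M j m) := by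
      exact Finset.sum_congr rfl fun m _ => hPapp j m
    rw [this, Finset.sum_sub_distrib, hrow, ← Finset.mul_sum]
    simp
  set t : Matrix (Fin (n+1)) (Fin (n+1)) ℝ := c⁻¹ • P with htdef
  have htapp : ∀ j m, t j m = c⁻¹ * P j m := by
    intro j m; simp [htdef, Matrix.smul_apply, smul_eq_mul]
  have htnn : ∀ j m, 0 ≤ t j m := fun j m => by
    rw [htapp]; exact mul_nonneg (by positivity) (hPnn j m)
  have htrow : ∀ j, ∑ m, t j m = (c - 1) / c := by
    intro j
    simp only [htapp, ← Finset.mul_sum]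
    rw [hProw, inv_mul_eq_div]
  have hnorm : ‖t‖ < 1 := by
    rw [← coe_nnnorm, ← NNReal.coe_one, NNReal.coe_lt_coe, Matrix.linfty_opNNNorm_def]
    rw [Finset.sup_lt_iff (by norm_num : (⊥ : NNReal) < 1)]
    intro j _
    rw [← NNReal.coe_lt_coe, NNReal.coe_sum, NNReal.coe_one]
    have : ∀ m, ((‖t j m‖₊ : ℝ)) = t j m := fun m => by
      rw [coe_nnnorm, Real.norm_eq_abs, abs_of_nonneg (htnn j m)]
    rw [Finset.sum_congr rfl fun m _ => this m, htrow]
    rw [div_lt_one hc0]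
    linarith
  -- the unit
  have hMeq : M = c • ((1 : Matrix _ _ ℝ) - t) := by
    rw [smul_sub, htdef, smul_smul, mul_inv_cancel₀ hc0.ne', one_smul, hP]
    simp
  set u0 : (Matrix (Fin (n+1)) (Fin (n+1)) ℝ)ˣ := Units.oneSub t hnorm with hu0
  have hval : (u0 : Matrix _ _ ℝ) = 1 - t := rfl
  have v1 : M * (c⁻¹ • (↑u0⁻¹ : Matrix _ _ ℝ)) = 1 := by
    rw [hMeq, smul_mul_assoc, mul_smul_comm, smul_smul, mul_inv_cancel₀ hc0.ne', one_smul,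
      ← hval, u0.mul_inv]
  have v2 : (c⁻¹ • (↑u0⁻¹ : Matrix _ _ ℝ)) * M = 1 := by
    rw [hMeq, mul_smul_comm, smul_mul_assoc, smul_smul, mul_inv_cancel₀ hc0.ne', one_smul,
      ← hval, u0.inv_mul]
  set u : (Matrix (Fin (n+1)) (Fin (n+1)) ℝ)ˣ := ⟨M, c⁻¹ • (↑u0⁻¹ : Matrix _ _ ℝ), v1, v2⟩
    with hu
  have hunit : IsUnit M := ⟨u, rfl⟩
  have hMinv : M⁻¹ = c⁻¹ • (↑u0⁻¹ : Matrix _ _ ℝ) := by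
    have := Matrix.coe_units_inv u
    rw [← this]
    rfl
  have hgeo : (↑u0⁻¹ : Matrix _ _ ℝ) = ∑' k : ℕ, t ^ k := rfl
  have hsum : Summable (fun k : ℕ => t ^ k) := summable_geometric_of_norm_lt_one hnorm
  -- entrywise evaluation of the tsum
  have happ : ∀ j m, (∑' k : ℕ, t ^ k) j m = ∑' k : ℕ, (t ^ k) j m := by
    intro j m
    let e : Matrix (Fin (n+1)) (Fin (n+1)) ℝ →ₗ[ℝ] ℝ :=
      { toFun := fun X => X j m
        map_add' := fun X Y => rfl
        map_smul' := fun r X => rfl }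
    have := LinearMap.toContinuousLinearMap e |>.map_tsum hsum
    exact this
  have hpow : ∀ k j m, 0 ≤ (t ^ k) j m := by
    intro k
    induction k with
    | zero => intro j m; rw [pow_zero]; rw [Matrix.one_apply]; split <;> norm_num
    | succ k ih =>
      intro j m
      rw [pow_succ, Matrix.mul_apply]
      exact Finset.sum_nonneg fun l _ => mul_nonneg (ih j l) (htnn l m)
  have hinv_nn : ∀ j m, 0 ≤ M⁻¹ j m := by
    intro j m
    rw [hMinv, Matrix.smul_apply, hgeo, smul_eq_mul, happ]
    exact mul_nonneg (by positivity) (tsum_nonneg fun k => hpow k j m)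
  -- row sums of the inverse are 1
  have hdet : IsUnit M.det := (Matrix.isUnit_iff_isUnit_det M).1 hunit
  have hinvmul : M⁻¹ * M = 1 := Matrix.nonsing_inv_mul M hdet
  have honev : M.mulVec (fun _ => (1:ℝ)) = fun _ => (1:ℝ) := by
    funext j
    simp only [Matrix.mulVec, dotProduct, mul_one]
    exact hrow j
  have hinvrow : ∀ j, ∑ m, M⁻¹ j m = 1 := by
    intro j
    have : M⁻¹.mulVec (fun _ => (1:ℝ)) = fun _ => (1:ℝ) := by
      rw [← honev, Matrix.mulVec_mulVec, hinvmul, Matrix.one_mulVec, honev]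
    have hj := congrFun this j
    simpa [Matrix.mulVec, dotProduct, mul_one] using hj
  refine ⟨hunit, hinv_nn, hinvrow, ?_⟩
  rw [← coe_nnnorm, ← NNReal.coe_one, NNReal.coe_le_coe, Matrix.linfty_opNNNorm_def]
  apply Finset.sup_le
  intro j _
  rw [← NNReal.coe_le_coe, NNReal.coe_sum, NNReal.coe_one]
  have : ∀ m, ((‖M⁻¹ j m‖₊ : ℝ)) = M⁻¹ j m := fun m => by
    rw [coe_nnnorm, Real.norm_eq_abs, abs_of_nonneg (hinv_nn j m)]
  rw [Finset.sum_congr rfl fun m _ => this m, hinvrow]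

/-- For every `τ > 0`, the matrix `I - τ A_{α,h}` is invertible, its inverse
has nonnegative entries, and its inverse has maximum absolute row sum (the operator norm
induced by the maximum norm) equal to `1`. Consequently the implicit Euler scheme
`u^{n+1} = (I - τ A_{α,h})⁻¹ u^n` is unconditionally stable in the maximum norm. -/
theorem implicit_euler_stable (α σ : ℝ) (hα : α ∈ Set.Ioc (1 : ℝ) 2) (hσ : 0 < σ)
    (N : ℕ) (hN : 1 ≤ N) (τ : ℝ) (hτ : 0 < τ) :
    IsUnit (1 - τ • Amat α σ N) ∧
    (∀ j m : Fin (N + 1), 0 ≤ (1 - τ • Amat α σ N)⁻¹ j m) ∧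
    (Finset.univ.sup' Finset.univ_nonempty
        (fun j : Fin (N + 1) => ∑ m : Fin (N + 1), |(1 - τ • Amat α σ N)⁻¹ j m|)) = 1 ∧
    (∀ (u0 : Fin (N + 1) → ℝ) (n : ℕ),
      ‖(((1 - τ • Amat α σ N)⁻¹) ^ n).mulVec u0‖ ≤ ‖u0‖) := by
  obtain ⟨h1, h2⟩ := hα
  set A := Amat α σ N with hA
  set M := (1 : Matrix (Fin (N+1)) (Fin (N+1)) ℝ) - τ • A with hM
  have hMapp : ∀ j m, M j m = (if j = m then (1:ℝ) else 0) - τ * A j m := by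
    intro j m
    simp [hM, Matrix.sub_apply, Matrix.smul_apply, Matrix.one_apply, smul_eq_mul]
  have hoff : ∀ j m, j ≠ m → M j m ≤ 0 := by
    intro j m hjm
    rw [hMapp, if_neg hjm]
    have := Amat_offdiag_nonneg h1 h2 hσ N hjm
    nlinarith
  have hrow : ∀ j, ∑ m, M j m = 1 := by
    intro j
    have : ∑ m, M j m = (∑ m, (if j = m then (1:ℝ) else 0)) - τ * ∑ m, A j m := by
      rw [Finset.mul_sum, ← Finset.sum_sub_distrib]
      exact Finset.sum_congr rfl fun m _ => hMapp j m
    rw [this, Amat_row_sum h1 h2 N j]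
    simp
  obtain ⟨hunit, hnn, hrowinv, hnorm⟩ := matrix_main M hoff hrow
  refine ⟨hunit, hnn, ?_, ?_⟩
  · have habs : ∀ j : Fin (N+1), (∑ m, |M⁻¹ j m|) = 1 := fun j => by
      rw [Finset.sum_congr rfl fun m _ => abs_of_nonneg (hnn j m), hrowinv j]
    rw [Finset.sup'_congr Finset.univ_nonempty rfl (fun j _ => habs j), Finset.sup'_const]
  · intro u0 n
    induction n with
    | zero => rw [pow_zero, Matrix.one_mulVec]
    | succ n ih =>
      rw [pow_succ', ← Matrix.mulVec_mulVec]
      calc ‖M⁻¹.mulVec (((M⁻¹) ^ n).mulVec u0)‖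
          ≤ ‖M⁻¹‖ * ‖((M⁻¹) ^ n).mulVec u0‖ := Matrix.linfty_opNorm_mulVec _ _
        _ ≤ 1 * ‖u0‖ := mul_le_mul hnorm ih (norm_nonneg _) (by norm_num)
        _ = ‖u0‖ := one_mul _
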